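/- Let T be a finite directed tree satisfying conditions (G1), (G2), (G3). Let s be a split node (out-degree 2) of T, and form a graph F from T as follows: delete s, delete the leaf ℓ incident to the incoming arc of s, and for each of the two outgoing arcs (s, u) of s, add a new node ℓ_u with a single new arc (ℓ_u, u). Then F is a disjoint union of exactly two directed trees, each of which satisfies conditions (G1), (G2), (G3). -/

import Mathlib

structure DirTree where
  V : Type
  [fintypeV : Fintype V]
  arc : V → V → Prop
  noLoop : ∀ v, ¬ arc v v
  noTwoWay : ∀ u v, arc u v → ¬ arc v u
  isTree : (SimpleGraph.fromRel arc).IsTree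

attribute [instance] DirTree.fintypeV

namespace DirTree
variable (T : DirTree)

/-- Number of outgoing arcs at `v`. -/
noncomputable def outDeg (v : T.V) : ℕ := Nat.card {u : T.V // T.arc v u}

/-- Number of incoming arcs at `v`. -/
noncomputable def inDeg (v : T.V) : ℕ := Nat.card {u : T.V // T.arc u v}

/-- Total degree of `v`. -/
noncomputable def deg (v : T.V) : ℕ := T.inDeg v + T.outDeg v

/-- A leaf is a node of total degree 1. -/
def IsLeaf (v : T.V) : Prop := T.deg v = 1

/-- (G1): every leaf has in-degree 0 and out-degree 1. -/
def G1 : Prop := ∀ v, T.IsLeaf v → T.inDeg v = 0 ∧ T.outDeg v = 1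

/-- (G2): every interior node has total degree 3 and at most two outgoing arcs. -/
def G2 : Prop := ∀ v, ¬ T.IsLeaf v → T.deg v = 3 ∧ T.outDeg v ≤ 2

/-- (G3): every node of out-degree 2 has its incoming arcs coming from leaves. -/
def G3 : Prop := ∀ v, T.outDeg v = 2 → ∀ u, T.arc u v → T.IsLeaf u

/-- A split node has out-degree 2. -/
def IsSplit (v : T.V) : Prop := T.outDeg v = 2

/-- A peak node has in-degree 3. -/
def IsPeak (v : T.V) : Prop := T.inDeg v = 3

end DirTree

open SimpleGraph
def gr (T : DirTree) : SimpleGraph T.V := SimpleGraph.fromRel T.arc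
lemma gr_adj {T : DirTree} {a b : T.V} : (gr T).Adj a b ↔ a ≠ b ∧ (T.arc a b ∨ T.arc b a) := by
  simp [gr, SimpleGraph.fromRel_adj]
def side (T : DirTree) (s u : T.V) : Set T.V := {v | ∃ w : (gr T).Walk v u, s ∉ w.support}
lemma side_ne_s {T : DirTree} {s u v : T.V} (h : v ∈ side T s u) : v ≠ s := by
  rintro rfl; obtain ⟨w, hw⟩ := h; exact hw w.start_mem_support
lemma mem_side_self {T : DirTree} {s u : T.V} (h : u ≠ s) : u ∈ side T s u :=
  ⟨SimpleGraph.Walk.nil, by simp [Ne.symm h]⟩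
lemma side_adj {T : DirTree} {s u v v' : T.V} (h : v ∈ side T s u)
    (ha : (gr T).Adj v' v) (h' : v' ≠ s) : v' ∈ side T s u := by
  obtain ⟨w, hw⟩ := h
  exact ⟨SimpleGraph.Walk.cons ha w, by
    simp [SimpleGraph.Walk.support_cons, hw, Ne.symm h']⟩

lemma ell_not_side {T : DirTree} {s ℓ u : T.V}
    (hninℓ : ∀ a, ¬ T.arc a ℓ) (houtℓ : ∀ b, T.arc ℓ b → b = s) (hu : u ≠ ℓ) :
    ℓ ∉ side T s u := by
  rintro ⟨w, hw⟩
  cases w with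
  | nil => exact hu rfl
  | @cons _ x _ h p =>
    have hx : x = s := by
      rcases (gr_adj.mp h).2 with h' | h'
      · exact houtℓ _ h'
      · exact absurd h' (hninℓ _)
    subst hx
    exact hw (by simp [SimpleGraph.Walk.support_cons, p.start_mem_support])

lemma side_cover {T : DirTree} {s ℓ u₁ u₂ : T.V}
    (hninℓ : ∀ a, ¬ T.arc a ℓ) (houtℓ : ∀ b, T.arc ℓ b → b = s)
    (hins : ∀ a, T.arc a s → a = ℓ)
    (houts : ∀ b, T.arc s b → b = u₁ ∨ b = u₂) :
    ∀ (n v) (w : (gr T).Walk v s), w.length ≤ n → v ≠ s → v ≠ ℓ →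
      v ∈ side T s u₁ ∨ v ∈ side T s u₂ := by
  intro n
  induction n with
  | zero =>
    intro v w hlen hv _
    cases w with
    | nil => exact absurd rfl hv
    | cons h p => simp [SimpleGraph.Walk.length_cons] at hlen
  | succ n ih =>
    intro v w hlen hv hvℓ
    cases w with
    | nil => exact absurd rfl hv
    | @cons _ x _ h p =>
      by_cases hxs : x = s
      · subst hxs
        rcases (gr_adj.mp h).2 with h' | h'
        · exact absurd (hins _ h') hvℓ
        · rcases houts _ h' with rfl | rfl
          · exact Or.inl (mem_side_self hv)
          · exact Or.inr (mem_side_self hv)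
      · have hxℓ : x ≠ ℓ := by
          rintro rfl
          rcases (gr_adj.mp h).2 with h' | h'
          · exact hninℓ _ h'
          · exact hv (houtℓ _ h')
        have hlen' : p.length ≤ n := by
          simp [SimpleGraph.Walk.length_cons] at hlen; omega
        rcases ih x p hlen' hxs hxℓ with hm | hm
        · exact Or.inl (side_adj hm h hv)
        · exact Or.inr (side_adj hm h hv)

lemma side_disjoint {T : DirTree} {s u₁ u₂ v : T.V}
    (h1 : T.arc s u₁) (h2 : T.arc s u₂) (hne : u₁ ≠ u₂)
    (m1 : v ∈ side T s u₁) (m2 : v ∈ side T s u₂) : False := by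
  classical
  obtain ⟨w₁, hw₁⟩ := m1
  obtain ⟨w₂, hw₂⟩ := m2
  have hsupp : s ∉ (w₁.reverse.append w₂).support := by
    rw [SimpleGraph.Walk.support_append]
    intro hmem
    rcases List.mem_append.mp hmem with hmem | hmem
    · rw [SimpleGraph.Walk.support_reverse] at hmem
      exact hw₁ (List.mem_reverse.mp hmem)
    · exact hw₂ (List.mem_of_mem_tail hmem)
  set p := (w₁.reverse.append w₂).toPath with hp
  have hps : s ∉ p.1.support := fun hc => hsupp (SimpleGraph.Walk.support_toPath_subset _ hc)
  have hu1s : u₁ ≠ s := fun hc => T.noLoop s (hc ▸ h1)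
  have hu2s : u₂ ≠ s := fun hc => T.noLoop s (hc ▸ h2)
  have ha1 : (gr T).Adj u₁ s := gr_adj.mpr ⟨hu1s, Or.inr h1⟩
  have ha2 : (gr T).Adj s u₂ := gr_adj.mpr ⟨Ne.symm hu2s, Or.inl h2⟩
  have hq : (SimpleGraph.Walk.cons ha1 (SimpleGraph.Walk.cons ha2 SimpleGraph.Walk.nil)).IsPath := by
    simp [SimpleGraph.Walk.cons_isPath_iff, hu1s, hne, Ne.symm hu2s]
  have huniq := T.isTree.existsUnique_path u₁ u₂
  have heq : p.1 = SimpleGraph.Walk.cons ha1 (SimpleGraph.Walk.cons ha2 SimpleGraph.Walk.nil) :=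
    huniq.unique p.2 hq
  apply hps
  rw [heq]
  simp

def sideArc (T : DirTree) (s u : T.V) :
    Option ↥(side T s u) → Option ↥(side T s u) → Prop
  | some a, some b => T.arc a.1 b.1
  | none, some b => b.1 = u
  | _, _ => False

def gr1 (T : DirTree) (s u : T.V) : SimpleGraph (Option ↥(side T s u)) :=
  SimpleGraph.fromRel (sideArc T s u)

lemma reach_some {T : DirTree} {s u : T.V} :
    ∀ {v v' : T.V} (w : (gr T).Walk v v'), s ∉ w.support →
      ∀ (hv : v ∈ side T s u) (hv' : v' ∈ side T s u),
        (gr1 T s u).Reachable (some ⟨v, hv⟩) (some ⟨v', hv'⟩) := by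
  intro v v' w
  induction w with
  | nil => intro _ hv hv'; exact SimpleGraph.Reachable.refl _
  | @cons v x _ h p ih =>
    intro hw hv hv'
    rw [SimpleGraph.Walk.support_cons] at hw
    have hps : s ∉ p.support := fun hc => hw (List.mem_cons_of_mem _ hc)
    have hxs : x ≠ s := fun hc => hps (hc ▸ p.start_mem_support)
    have hx : x ∈ side T s u := side_adj hv h.symm hxs
    have hadj : (gr1 T s u).Adj (some ⟨v, hv⟩) (some ⟨x, hx⟩) := by
      refine (SimpleGraph.fromRel_adj _ _ _).mpr ⟨?_, ?_⟩
      · intro hc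
        exact (gr_adj.mp h).1 (congrArg (Option.elim · s Subtype.val) hc)
      · exact (gr_adj.mp h).2
    exact hadj.reachable.trans (ih hps hx hv')

lemma gr1_connected {T : DirTree} {s u : T.V} (hu : T.arc s u) :
    (gr1 T s u).Connected := by
  have hus : u ≠ s := fun hc => T.noLoop s (hc ▸ hu)
  have humem : u ∈ side T s u := mem_side_self hus
  have key : ∀ x, (gr1 T s u).Reachable x (some ⟨u, humem⟩) := by
    rintro (_ | ⟨v, hv⟩)
    · refine SimpleGraph.Adj.reachable ?_
      exact (SimpleGraph.fromRel_adj _ _ _).mpr ⟨by simp, Or.inl rfl⟩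
    · obtain ⟨w, hw⟩ := hv
      exact reach_some w hw _ humem
  exact (SimpleGraph.connected_iff_exists_forall_reachable _).mpr
    ⟨some ⟨u, humem⟩, fun w => (key w).symm⟩

def sideEmb (T : DirTree) (s u : T.V) : Option ↥(side T s u) → T.V :=
  fun x => x.elim s Subtype.val

lemma sideEmb_inj {T : DirTree} {s u : T.V} : Function.Injective (sideEmb T s u) := by
  rintro (_ | ⟨a, ha⟩) (_ | ⟨b, hb⟩) h
  · rfl
  · exact absurd h.symm (side_ne_s hb)
  · exact absurd h (side_ne_s ha)
  · simpa [sideEmb, Subtype.ext_iff] using h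

def sideHom (T : DirTree) (s u : T.V) (hu : T.arc s u) : gr1 T s u →g gr T where
  toFun := sideEmb T s u
  map_rel' := by
    rintro (_ | a) (_ | b) h
    · exact absurd rfl ((SimpleGraph.fromRel_adj _ _ _).mp h).1
    · show (gr T).Adj s b.1
      rcases ((SimpleGraph.fromRel_adj _ _ _).mp h).2 with h' | h'
      · exact gr_adj.mpr ⟨Ne.symm (side_ne_s b.2), Or.inl (by
          rw [show (b.1 : T.V) = u from h']; exact hu)⟩
      · exact h'.elim
    · show (gr T).Adj a.1 s
      rcases ((SimpleGraph.fromRel_adj _ _ _).mp h).2 with h' | h'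
      · exact h'.elim
      · exact gr_adj.mpr ⟨side_ne_s a.2, Or.inr (by
          rw [show (a.1 : T.V) = u from h']; exact hu)⟩
    · show (gr T).Adj a.1 b.1
      rcases ((SimpleGraph.fromRel_adj _ _ _).mp h).2 with h' | h'
      · have h'' : T.arc a.1 b.1 := h'
        exact gr_adj.mpr ⟨fun hc => T.noLoop _ (hc ▸ h''), Or.inl h''⟩
      · have h'' : T.arc b.1 a.1 := h'
        exact gr_adj.mpr ⟨fun hc => T.noLoop _ (hc ▸ h''), Or.inr h''⟩

lemma gr1_acyclic {T : DirTree} {s u : T.V} (hu : T.arc s u) :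
    (gr1 T s u).IsAcyclic := by
  intro v c hc
  exact T.isTree.2 _ (hc.map (f := sideHom T s u hu) sideEmb_inj)

noncomputable def sideTree (T : DirTree) (s u : T.V) (hu : T.arc s u) : DirTree where
  V := Option ↥(side T s u)
  fintypeV := by
    classical
    haveI : Fintype ↥(side T s u) := Set.Finite.fintype (Set.toFinite _)
    infer_instance
  arc := sideArc T s u
  noLoop := by
    rintro (_ | a) h
    · exact h
    · exact T.noLoop _ h
  noTwoWay := by
    rintro (_ | a) (_ | b) h h'
    · exact h
    · exact h'
    · exact h
    · exact T.noTwoWay _ _ h h'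
  isTree := ⟨gr1_connected hu, gr1_acyclic hu⟩

lemma card_one_unique {α : Type*} {p : α → Prop} (h : Nat.card {x // p x} = 1)
    {b : α} (hb : p b) : ∀ c, p c → c = b := by
  intro c hc
  have := (Nat.card_eq_one_iff_unique.mp h).1
  exact congrArg Subtype.val (this.elim ⟨c, hc⟩ ⟨b, hb⟩)

lemma card_zero_not {α : Type*} [Finite α] {p : α → Prop}
    (h : Nat.card {x // p x} = 0) : ∀ c, ¬ p c := by
  intro c hc
  rcases Nat.card_eq_zero.mp h with h' | h'
  · exact h'.elim ⟨c, hc⟩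
  · exact absurd (Finite.of_injective (Subtype.val) Subtype.val_injective) h'.not_finite

lemma basic_facts (T : DirTree) (hG1 : T.G1) (hG2 : T.G2) (hG3 : T.G3)
    (s ℓ : T.V) (hs : T.outDeg s = 2) (hℓ : T.arc ℓ s) :
    (∀ a, T.arc a s → a = ℓ) ∧ (∀ a, ¬ T.arc a ℓ) ∧ (∀ b, T.arc ℓ b → b = s) := by
  haveI : Finite T.V := Finite.of_fintype _
  have hsnl : ¬ T.IsLeaf s := by
    intro h
    have := (hG1 s h).2
    rw [hs] at this; exact absurd this (by norm_num)
  have hdeg : T.deg s = 3 := (hG2 s hsnl).1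
  have hins : T.inDeg s = 1 := by
    have : T.inDeg s + T.outDeg s = 3 := hdeg
    omega
  have hlf : T.IsLeaf ℓ := hG3 s hs ℓ hℓ
  obtain ⟨hinℓ, houtℓ⟩ := hG1 ℓ hlf
  exact ⟨card_one_unique hins hℓ, card_zero_not hinℓ, card_one_unique houtℓ hℓ⟩

section Degrees

variable {T : DirTree} {s ℓ u : T.V}

lemma arc_mem_side_right (hnot : ℓ ∉ side T s u) (hins : ∀ a, T.arc a s → a = ℓ)
    {v b : T.V} (hv : v ∈ side T s u) (h : T.arc v b) : b ∈ side T s u := by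
  have hbs : b ≠ s := by
    rintro rfl
    exact hnot ((hins v h) ▸ hv)
  have hvb : v ≠ b := fun hc => T.noLoop _ (hc ▸ h)
  exact side_adj hv (gr_adj.mpr ⟨Ne.symm hvb, Or.inr h⟩) hbs

lemma arc_mem_side_left {v b : T.V} (hv : v ∈ side T s u) (h : T.arc b v) (hbs : b ≠ s) :
    b ∈ side T s u := by
  have hvb : b ≠ v := fun hc => T.noLoop _ (hc ▸ h)
  exact side_adj hv (gr_adj.mpr ⟨hvb, Or.inl h⟩) hbs

lemma sideTree_outDeg_none (hu : T.arc s u) :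
    (sideTree T s u hu).outDeg none = 1 := by
  show Nat.card {y : Option ↥(side T s u) // sideArc T s u none y} = 1
  have hus : u ≠ s := fun hc => T.noLoop s (hc ▸ hu)
  have humem : u ∈ side T s u := mem_side_self hus
  have hne : Nonempty {y : Option ↥(side T s u) // sideArc T s u none y} :=
    ⟨⟨some ⟨u, humem⟩, rfl⟩⟩
  have hsub : Subsingleton {y : Option ↥(side T s u) // sideArc T s u none y} := by
    constructor
    rintro ⟨(_999 | a), ha⟩ ⟨(_999 | b), hb⟩
    · exact ha.elim
    · exact ha.elim
    · exact hb.elim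
    · have ha' : (a.1 : T.V) = u := ha
      have hb' : (b.1 : T.V) = u := hb
      exact Subtype.ext (by rw [Option.some_inj]; exact Subtype.ext (ha'.trans hb'.symm))
  exact Nat.card_eq_one_iff_unique.mpr ⟨hsub, hne⟩

lemma sideTree_inDeg_none (hu : T.arc s u) :
    (sideTree T s u hu).inDeg none = 0 := by
  show Nat.card {y : Option ↥(side T s u) // sideArc T s u y none} = 0
  have : IsEmpty {y : Option ↥(side T s u) // sideArc T s u y none} := by
    constructor
    rintro ⟨(_999 | a), ha⟩ <;> exact ha.elim
  exact Nat.card_of_isEmpty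

lemma sideTree_outDeg_some (hu : T.arc s u)
    (hnot : ℓ ∉ side T s u) (hins : ∀ a, T.arc a s → a = ℓ)
    (v : ↥(side T s u)) :
    (sideTree T s u hu).outDeg (some v) = T.outDeg v.1 := by
  show Nat.card {y : Option ↥(side T s u) // sideArc T s u (some v) y}
      = Nat.card {b : T.V // T.arc v.1 b}
  refine (Nat.card_congr (Equiv.ofBijective
    (fun b : {b : T.V // T.arc v.1 b} =>
      (⟨some ⟨b.1, arc_mem_side_right hnot hins v.2 b.2⟩, b.2⟩ :
        {y : Option ↥(side T s u) // sideArc T s u (some v) y})) ⟨?_, ?_⟩)).symm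
  · rintro ⟨b, hb⟩ ⟨c, hc⟩ h
    simp only [Subtype.mk.injEq, Option.some_inj] at h
    exact Subtype.ext (congrArg (fun t => (Option.elim t s Subtype.val : T.V)) (congrArg Subtype.val h))
  · rintro ⟨(_999 | b), hb⟩
    · exact hb.elim
    · exact ⟨⟨b.1, hb⟩, Subtype.ext (by simp)⟩

lemma sideTree_inDeg_some_ne (hu : T.arc s u)
    (huniq : ∀ w, T.arc s w → w ∈ side T s u → w = u)
    (v : ↥(side T s u)) (hvu : v.1 ≠ u) :
    (sideTree T s u hu).inDeg (some v) = T.inDeg v.1 := by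
  show Nat.card {y : Option ↥(side T s u) // sideArc T s u y (some v)}
      = Nat.card {b : T.V // T.arc b v.1}
  have hbs : ∀ b : {b : T.V // T.arc b v.1}, b.1 ≠ s := by
    rintro ⟨b, hb⟩ hc
    have hc' : b = s := hc
    exact hvu (huniq v.1 (hc' ▸ hb) v.2)
  refine (Nat.card_congr (Equiv.ofBijective
    (fun b : {b : T.V // T.arc b v.1} =>
      (⟨some ⟨b.1, arc_mem_side_left v.2 b.2 (hbs b)⟩, b.2⟩ :
        {y : Option ↥(side T s u) // sideArc T s u y (some v)})) ⟨?_, ?_⟩)).symm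
  · rintro ⟨b, hb⟩ ⟨c, hc⟩ h
    simp only [Subtype.mk.injEq, Option.some_inj] at h
    exact Subtype.ext (congrArg (fun t => (Option.elim t s Subtype.val : T.V)) (congrArg Subtype.val h))
  · rintro ⟨(_999 | b), hb⟩
    · exact absurd (show (v.1 : T.V) = u from hb) hvu
    · exact ⟨⟨b.1, hb⟩, Subtype.ext (by simp)⟩

lemma sideTree_inDeg_some_eq (hu : T.arc s u)
    (v : ↥(side T s u)) (hvu : v.1 = u) :
    (sideTree T s u hu).inDeg (some v) = T.inDeg v.1 := by
  classical
  show Nat.card {y : Option ↥(side T s u) // sideArc T s u y (some v)}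
      = Nat.card {b : T.V // T.arc b v.1}
  refine (Nat.card_congr (Equiv.ofBijective
    (fun b : {b : T.V // T.arc b v.1} =>
      if hbs : b.1 = s then
        (⟨none, hvu⟩ : {y : Option ↥(side T s u) // sideArc T s u y (some v)})
      else ⟨some ⟨b.1, arc_mem_side_left v.2 b.2 hbs⟩, b.2⟩) ⟨?_, ?_⟩)).symm
  · rintro ⟨b, hb⟩ ⟨c, hc⟩ h
    by_cases h1 : b = s <;> by_cases h2 : c = s
    · exact Subtype.ext (h1.trans h2.symm)
    · simp [h1, h2] at h
      exact absurd (congrArg Subtype.val h) (by simp)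
    · simp [h1, h2] at h
      exact absurd (congrArg Subtype.val h) (by simp)
    · simp [h1, h2] at h
      exact Subtype.ext (congrArg (fun t => (Option.elim t s Subtype.val : T.V)) (congrArg Subtype.val h))
  · rintro ⟨(_999 | b), hb⟩
    · refine ⟨⟨s, by rw [hvu]; exact hu⟩, ?_⟩
      simp
    · refine ⟨⟨b.1, hb⟩, ?_⟩
      simp [side_ne_s b.2]

end Degrees



lemma sideTree_G123 (T : DirTree) (hG1 : T.G1) (hG2 : T.G2) (hG3 : T.G3)
    (s ℓ u : T.V) (hs : T.outDeg s = 2) (hℓ : T.arc ℓ s) (hu : T.arc s u)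
    (huniq : ∀ w, T.arc s w → w ∈ side T s u → w = u) :
    (sideTree T s u hu).G1 ∧ (sideTree T s u hu).G2 ∧ (sideTree T s u hu).G3 := by
  obtain ⟨hins, hninℓ, houtℓ⟩ := basic_facts T hG1 hG2 hG3 s ℓ hs hℓ
  have huℓ : u ≠ ℓ := fun hc => hninℓ s (hc ▸ hu)
  have hnot : ℓ ∉ side T s u := ell_not_side hninℓ houtℓ huℓ
  have hout : ∀ v : ↥(side T s u), (sideTree T s u hu).outDeg (some v) = T.outDeg v.1 :=
    sideTree_outDeg_some hu hnot hins
  have hin : ∀ v : ↥(side T s u), (sideTree T s u hu).inDeg (some v) = T.inDeg v.1 := by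
    intro v
    by_cases hvu : v.1 = u
    · exact sideTree_inDeg_some_eq hu v hvu
    · exact sideTree_inDeg_some_ne hu huniq v hvu
  have hdeg : ∀ v : ↥(side T s u), (sideTree T s u hu).deg (some v) = T.deg v.1 := by
    intro v
    show (sideTree T s u hu).inDeg (some v) + (sideTree T s u hu).outDeg (some v)
      = T.inDeg v.1 + T.outDeg v.1
    rw [hin v, hout v]
  have hdegnone : (sideTree T s u hu).deg none = 1 := by
    show (sideTree T s u hu).inDeg none + (sideTree T s u hu).outDeg none = 1
    rw [sideTree_inDeg_none hu, sideTree_outDeg_none hu]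
  have hleaf : ∀ v : ↥(side T s u),
      ((sideTree T s u hu).IsLeaf (some v) ↔ T.IsLeaf v.1) := by
    intro v
    show (sideTree T s u hu).deg (some v) = 1 ↔ T.deg v.1 = 1
    rw [hdeg v]
  refine ⟨?_, ?_, ?_⟩
  · rintro (_999 | v) hlf
    · exact ⟨sideTree_inDeg_none hu, sideTree_outDeg_none hu⟩
    · obtain ⟨h1, h2⟩ := hG1 v.1 ((hleaf v).mp hlf)
      rw [hin v, hout v]
      exact ⟨h1, h2⟩
  · rintro (_999 | v) hlf
    · exact absurd hdegnone (by intro hc; exact hlf hc)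
    · obtain ⟨h1, h2⟩ := hG2 v.1 (fun hc => hlf ((hleaf v).mpr hc))
      refine ⟨by rw [hdeg v]; exact h1, by rw [hout v]; exact h2⟩
  · rintro (_999 | v) h2 b hb
    · rw [sideTree_outDeg_none hu] at h2; exact absurd h2 (by norm_num)
    · rw [hout v] at h2
      match b, hb with
      | none, hb =>
        show (sideTree T s u hu).deg none = 1
        exact hdegnone
      | some b, hb =>
        exact (hleaf b).mpr (hG3 v.1 h2 b.1 hb)

/-- Vertex set of the graph obtained from `T` by deleting the split node `s` and the
leaf `ℓ`, and adding one new leaf `ℓ_u` for each out-neighbor `u` of `s`. -/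
def SplitV (T : DirTree) (s ℓ : T.V) : Type :=
  {v : T.V // v ≠ s ∧ v ≠ ℓ} ⊕ {u : T.V // T.arc s u}

/-- Arc relation of the graph obtained by the splitting operation at `s`:
old arcs among surviving nodes are kept, and each new leaf `ℓ_u` gets a single
arc `(ℓ_u, u)`. -/
def SplitArc (T : DirTree) (s ℓ : T.V) : SplitV T s ℓ → SplitV T s ℓ → Prop
  | Sum.inl a, Sum.inl b => T.arc a.1 b.1
  | Sum.inr u, Sum.inl b => u.1 = b.1
  | _, _ => False

def assemble (T : DirTree) (s ℓ x y : T.V) (hx : T.arc s x) (hy : T.arc s y)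
    (h1 : ∀ v : ↥(side T s x), v.1 ≠ s ∧ v.1 ≠ ℓ)
    (h2 : ∀ v : ↥(side T s y), v.1 ≠ s ∧ v.1 ≠ ℓ) :
    Option ↥(side T s x) ⊕ Option ↥(side T s y) → SplitV T s ℓ
  | Sum.inl (some v) => Sum.inl ⟨v.1, h1 v⟩
  | Sum.inl none => Sum.inr ⟨x, hx⟩
  | Sum.inr (some v) => Sum.inl ⟨v.1, h2 v⟩
  | Sum.inr none => Sum.inr ⟨y, hy⟩

/-- splitting a (G1)-(G3) directed tree at a split node `s` (deleting `s`
and the leaf `ℓ` on its incoming arc and capping the two outgoing arcs with new leaves)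
yields the disjoint union of exactly two directed trees, each satisfying (G1)-(G3). -/
theorem stmt4 (T : DirTree) (hG1 : T.G1) (hG2 : T.G2) (hG3 : T.G3)
    (s ℓ : T.V) (hs : T.outDeg s = 2) (hℓ : T.arc ℓ s) :
    ∃ (T₁ T₂ : DirTree) (e : (T₁.V ⊕ T₂.V) ≃ SplitV T s ℓ),
      (T₁.G1 ∧ T₁.G2 ∧ T₁.G3) ∧ (T₂.G1 ∧ T₂.G2 ∧ T₂.G3) ∧
      ∀ x y : T₁.V ⊕ T₂.V,
        SplitArc T s ℓ (e x) (e y) ↔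
          ((∃ a b : T₁.V, x = Sum.inl a ∧ y = Sum.inl b ∧ T₁.arc a b) ∨
           (∃ a b : T₂.V, x = Sum.inr a ∧ y = Sum.inr b ∧ T₂.arc a b)) := by
  classical
  obtain ⟨hins, hninℓ, houtℓ⟩ := basic_facts T hG1 hG2 hG3 s ℓ hs hℓ
  obtain ⟨x, y, hxy, hcov⟩ := Nat.card_eq_two_iff.mp hs
  have hne : (x.1 : T.V) ≠ y.1 := fun h => hxy (Subtype.ext h)
  have houts : ∀ b, T.arc s b → b = x.1 ∨ b = y.1 := by
    intro b hb
    have hmem : (⟨b, hb⟩ : {u // T.arc s u}) ∈ ({x, y} : Set {u // T.arc s u}) := by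
      rw [hcov]; trivial
    rcases hmem with h | h
    · exact Or.inl (congrArg Subtype.val h)
    · exact Or.inr (congrArg Subtype.val h)
  have hxs : (x.1 : T.V) ≠ s := fun hc => T.noLoop s (by have h2 := x.2; rw [hc] at h2; exact h2)
  have hys : (y.1 : T.V) ≠ s := fun hc => T.noLoop s (by have h2 := y.2; rw [hc] at h2; exact h2)
  have hxℓ : (x.1 : T.V) ≠ ℓ := fun hc => hninℓ s (by have h2 := x.2; rw [hc] at h2; exact h2)
  have hyℓ : (y.1 : T.V) ≠ ℓ := fun hc => hninℓ s (by have h2 := y.2; rw [hc] at h2; exact h2)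
  have hnotx : ℓ ∉ side T s x.1 := ell_not_side hninℓ houtℓ hxℓ
  have hnoty : ℓ ∉ side T s y.1 := ell_not_side hninℓ houtℓ hyℓ
  have hdisj : ∀ v, v ∈ side T s x.1 → v ∈ side T s y.1 → False :=
    fun v h1 h2 => side_disjoint x.2 y.2 hne h1 h2
  have huniqx : ∀ w, T.arc s w → w ∈ side T s x.1 → w = x.1 := by
    intro w hw hwm
    rcases houts w hw with rfl | rfl
    · rfl
    · exact absurd hwm (fun h => hdisj _ h (mem_side_self hys))
  have huniqy : ∀ w, T.arc s w → w ∈ side T s y.1 → w = y.1 := by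
    intro w hw hwm
    rcases houts w hw with rfl | rfl
    · exact absurd hwm (fun h => hdisj _ (mem_side_self hxs) h)
    · rfl
  have hGx := sideTree_G123 T hG1 hG2 hG3 s ℓ x.1 hs hℓ x.2 huniqx
  have hGy := sideTree_G123 T hG1 hG2 hG3 s ℓ y.1 hs hℓ y.2 huniqy
  have hmx : ∀ v : ↥(side T s x.1), v.1 ≠ s ∧ v.1 ≠ ℓ :=
    fun v => ⟨side_ne_s v.2, fun hc => hnotx (by rw [← hc]; exact v.2)⟩
  have hmy : ∀ v : ↥(side T s y.1), v.1 ≠ s ∧ v.1 ≠ ℓ :=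
    fun v => ⟨side_ne_s v.2, fun hc => hnoty (by rw [← hc]; exact v.2)⟩
  have hcover : ∀ v : T.V, v ≠ s → v ≠ ℓ → v ∈ side T s x.1 ∨ v ∈ side T s y.1 := by
    intro v hvs hvℓ
    obtain ⟨w⟩ := T.isTree.1 v s
    exact side_cover hninℓ houtℓ hins houts w.length v w le_rfl hvs hvℓ
  have hbij : Function.Bijective (assemble T s ℓ x.1 y.1 x.2 y.2 hmx hmy) := by
    constructor
    · rintro ((_999 | a) | (_999 | a)) ((_999 | b) | (_999 | b)) h
      · rfl
      · simp [assemble] at h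
      · exact absurd (congrArg Subtype.val (Sum.inr.inj h)) hne
      · simp [assemble] at h
      · simp [assemble] at h
      · simp only [assemble] at h
        have h0 := Sum.inl.inj h
        have h' : (a.1 : T.V) = b.1 :=
          congrArg (Subtype.val : {v : T.V // v ≠ s ∧ v ≠ ℓ} → T.V) h0
        exact congrArg (fun t => Sum.inl (some t)) (Subtype.ext h')
      · simp [assemble] at h
      · simp only [assemble] at h
        have h0 := Sum.inl.inj h
        have h' : (a.1 : T.V) = b.1 :=
          congrArg (Subtype.val : {v : T.V // v ≠ s ∧ v ≠ ℓ} → T.V) h0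
        exact (hdisj a.1 a.2 (by rw [h']; exact b.2)).elim
      · exact absurd (congrArg Subtype.val (Sum.inr.inj h)).symm hne
      · simp [assemble] at h
      · rfl
      · simp [assemble] at h
      · simp [assemble] at h
      · simp only [assemble] at h
        have h0 := Sum.inl.inj h
        have h' : (a.1 : T.V) = b.1 :=
          congrArg (Subtype.val : {v : T.V // v ≠ s ∧ v ≠ ℓ} → T.V) h0
        exact (hdisj a.1 (by rw [h']; exact b.2) a.2).elim
      · simp [assemble] at h
      · simp only [assemble] at h
        have h0 := Sum.inl.inj h
        have h' : (a.1 : T.V) = b.1 :=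
          congrArg (Subtype.val : {v : T.V // v ≠ s ∧ v ≠ ℓ} → T.V) h0
        exact congrArg (fun t => Sum.inr (some t)) (Subtype.ext h')
    · rintro (⟨v, hvs, hvℓ⟩ | ⟨b, hb⟩)
      · rcases hcover v hvs hvℓ with hm | hm
        · exact ⟨Sum.inl (some ⟨v, hm⟩), rfl⟩
        · exact ⟨Sum.inr (some ⟨v, hm⟩), rfl⟩
      · rcases houts b hb with rfl | rfl
        · exact ⟨Sum.inl none, rfl⟩
        · exact ⟨Sum.inr none, rfl⟩
  refine ⟨sideTree T s x.1 x.2, sideTree T s y.1 y.2,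
    Equiv.ofBijective _ hbij, hGx, hGy, ?_⟩
  intro z w
  rcases z with (_999 | a) | (_999 | a) <;> rcases w with (_999 | b) | (_999 | b)
  -- z = inl none, w = inl none
  · constructor
    · intro h; exact h.elim
    · rintro (⟨a', b', ha, hb, harc⟩ | ⟨a', b', ha, hb, harc⟩)
      · cases ha; cases hb; exact harc.elim
      · simp at ha
  -- z = inl none, w = inl (some b)
  · constructor
    · intro h
      exact Or.inl ⟨none, some b, rfl, rfl, (show (x.1 : T.V) = b.1 from h).symm⟩
    · rintro (⟨a', b', ha, hb, harc⟩ | ⟨a', b', ha, hb, harc⟩)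
      · cases ha; cases hb; exact (show (b.1 : T.V) = x.1 from harc).symm
      · simp at ha
  -- z = inl none, w = inr none
  · constructor
    · intro h; exact h.elim
    · rintro (⟨a', b', ha, hb, harc⟩ | ⟨a', b', ha, hb, harc⟩)
      · simp at hb
      · simp at ha
  -- z = inl none, w = inr (some b)
  · constructor
    · intro h
      have hbm : (b.1 : T.V) ∈ side T s x.1 := by
        rw [← show (x.1 : T.V) = b.1 from h]; exact mem_side_self hxs
      exact (hdisj b.1 hbm b.2).elim
    · rintro (⟨a', b', ha, hb, harc⟩ | ⟨a', b', ha, hb, harc⟩)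
      · simp at hb
      · simp at ha
  -- z = inl (some a), w = inl none
  · constructor
    · intro h; exact h.elim
    · rintro (⟨a', b', ha, hb, harc⟩ | ⟨a', b', ha, hb, harc⟩)
      · cases ha; cases hb; exact harc.elim
      · simp at ha
  -- z = inl (some a), w = inl (some b)
  · constructor
    · intro h; exact Or.inl ⟨some a, some b, rfl, rfl, h⟩
    · rintro (⟨a', b', ha, hb, harc⟩ | ⟨a', b', ha, hb, harc⟩)
      · cases ha; cases hb; exact harc
      · simp at ha
  -- z = inl (some a), w = inr none
  · constructor
    · intro h; exact h.elim
    · rintro (⟨a', b', ha, hb, harc⟩ | ⟨a', b', ha, hb, harc⟩)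
      · simp at hb
      · simp at ha
  -- z = inl (some a), w = inr (some b)
  · constructor
    · intro h
      exact (hdisj b.1 (arc_mem_side_right hnotx hins a.2 h) b.2).elim
    · rintro (⟨a', b', ha, hb, harc⟩ | ⟨a', b', ha, hb, harc⟩)
      · simp at hb
      · simp at ha
  -- z = inr none, w = inl none
  · constructor
    · intro h; exact h.elim
    · rintro (⟨a', b', ha, hb, harc⟩ | ⟨a', b', ha, hb, harc⟩)
      · simp at ha
      · simp at hb
  -- z = inr none, w = inl (some b)
  · constructor
    · intro h
      have hbm : (b.1 : T.V) ∈ side T s y.1 := by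
        rw [← show (y.1 : T.V) = b.1 from h]; exact mem_side_self hys
      exact (hdisj b.1 b.2 hbm).elim
    · rintro (⟨a', b', ha, hb, harc⟩ | ⟨a', b', ha, hb, harc⟩)
      · simp at ha
      · simp at hb
  -- z = inr none, w = inr none
  · constructor
    · intro h; exact h.elim
    · rintro (⟨a', b', ha, hb, harc⟩ | ⟨a', b', ha, hb, harc⟩)
      · simp at ha
      · cases ha; cases hb; exact harc.elim
  -- z = inr none, w = inr (some b)
  · constructor
    · intro h
      exact Or.inr ⟨none, some b, rfl, rfl, (show (y.1 : T.V) = b.1 from h).symm⟩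
    · rintro (⟨a', b', ha, hb, harc⟩ | ⟨a', b', ha, hb, harc⟩)
      · simp at ha
      · cases ha; cases hb; exact (show (b.1 : T.V) = y.1 from harc).symm
  -- z = inr (some a), w = inl none
  · constructor
    · intro h; exact h.elim
    · rintro (⟨a', b', ha, hb, harc⟩ | ⟨a', b', ha, hb, harc⟩)
      · simp at ha
      · simp at hb
  -- z = inr (some a), w = inl (some b)
  · constructor
    · intro h
      exact (hdisj b.1 b.2 (arc_mem_side_right hnoty hins a.2 h)).elim
    · rintro (⟨a', b', ha, hb, harc⟩ | ⟨a', b', ha, hb, harc⟩)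
      · simp at ha
      · simp at hb
  -- z = inr (some a), w = inr none
  · constructor
    · intro h; exact h.elim
    · rintro (⟨a', b', ha, hb, harc⟩ | ⟨a', b', ha, hb, harc⟩)
      · simp at ha
      · cases ha; cases hb; exact harc.elim
  -- z = inr (some a), w = inr (some b)
  · constructor
    · intro h; exact Or.inr ⟨some a, some b, rfl, rfl, h⟩
    · rintro (⟨a', b', ha, hb, harc⟩ | ⟨a', b', ha, hb, harc⟩)
      · simp at ha
      · cases ha; cases hb; exact harc
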